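/- Let α < N, 0 < σ < N, b > 0 and θ ∈ ℝ with b + θ + α > 0. Let ω be a Borel measure on Ω for which there exist c₁, c₂ > 0 with c₁ · max{d(x), s}^b · max{d_Σ(x), s}^θ · s^N ≤ ω(B(x,s) ∩ Ω) ≤ c₂ · max{d(x), s}^b · max{d_Σ(x), s}^θ · s^N for all x ∈ Ω and 0 < s ≤ 4 diam(Ω). Then there exists a constant C > 0 such that for every x ∈ Ω and every r > 0, ∫₀^{2r} ω(𝔅(x,t)) t^{−2} dt ≤ C ∫₀^{r} ω(𝔅(x,t)) t^{−2} dt. -/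

import Mathlib

open MeasureTheory Set Metric

/-- The kernel `𝒩_{α,σ}(x,y) = max{|x−y|, d_Σ(x), d_Σ(y)}^α /
(|x−y|^{N−σ} · max{|x−y|, d(x), d(y)}^σ)`. -/
noncomputable def NKernel (N : ℕ) (α σ : ℝ) (Ω S : Set (EuclideanSpace ℝ (Fin N)))
    (x y : EuclideanSpace ℝ (Fin N)) : ℝ :=
  (max (dist x y) (max (infDist x S) (infDist y S))) ^ α /
    (dist x y ^ ((N : ℝ) - σ) *
      (max (dist x y) (max (infDist x (frontier Ω)) (infDist y (frontier Ω)))) ^ σ)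

/-- The quasi-ball `𝔅(x,s) = {y ∈ Ω : y ≠ x and 𝒩_{α,σ}(y,x)⁻¹ ≤ s}`. -/
def quasiBall (N : ℕ) (α σ : ℝ) (Ω S : Set (EuclideanSpace ℝ (Fin N)))
    (x : EuclideanSpace ℝ (Fin N)) (s : ℝ) : Set (EuclideanSpace ℝ (Fin N)) :=
  {y ∈ Ω | y ≠ x ∧ (NKernel N α σ Ω S y x)⁻¹ ≤ s}


section AuxLemmas
open Real


private lemma max_ratio_anti {s s' c c' : ℝ} (hs : 0 ≤ s) (hss' : s ≤ s') (hcc' : c ≤ c') :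
    max s' c' * max s c ≤ max s' c * max s c' := by
  have hs' : 0 ≤ s' := hs.trans hss'
  rcases le_or_gt c' s' with h | h
  · rw [max_eq_left h, max_eq_left (hcc'.trans h)]
    exact mul_le_mul_of_nonneg_left (max_le_max le_rfl hcc') hs'
  · rw [max_eq_right h.le, max_eq_right ((hss'.trans h.le))]
    have h1 : max s c ≤ max s' c := max_le_max hss' le_rfl
    nlinarith [le_max_left s c, (hs'.trans h.le)]

private lemma core_rpow {ν μ lam e e₁ e₂ : ℝ} (hν : 1 ≤ ν) (hνμ : ν ≤ μ) (hνl : ν ≤ lam)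
    (he : e ≤ e₁ + e₂) (h1 : 0 ≤ e₁) (h2 : 0 ≤ e₂) : ν ^ e ≤ μ ^ e₁ * lam ^ e₂ := by
  have hν0 : (0:ℝ) < ν := lt_of_lt_of_le one_pos hν
  calc ν ^ e ≤ ν ^ (e₁ + e₂) := Real.rpow_le_rpow_of_exponent_le hν he
    _ = ν ^ e₁ * ν ^ e₂ := Real.rpow_add hν0 _ _
    _ ≤ μ ^ e₁ * lam ^ e₂ :=
        mul_le_mul (Real.rpow_le_rpow hν0.le hνμ h1) (Real.rpow_le_rpow hν0.le hνl h2)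
          (Real.rpow_nonneg hν0.le _) (Real.rpow_nonneg (by linarith) _)

private lemma g_scale {Nr σ α dx dS s lam : ℝ} (hσ0 : 0 < σ) (hσN : σ < Nr) (hα : α < Nr)
    (hdx : 0 < dx) (hdS : dx ≤ dS) (hs : 0 < s) (hl : 1 ≤ lam) :
    lam ^ (Nr - max σ α) * (s ^ (Nr - σ) * (max s dx) ^ σ / (max s dS) ^ α)
      ≤ (lam * s) ^ (Nr - σ) * (max (lam * s) dx) ^ σ / (max (lam * s) dS) ^ α := by
  have hl0 : (0:ℝ) < lam := lt_of_lt_of_le one_pos hl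
  have hls : s ≤ lam * s := le_mul_of_one_le_left hs.le hl
  set A := max s dx with hA
  set A' := max (lam * s) dx with hA'
  set B := max s dS with hB
  set B' := max (lam * s) dS with hB'
  have hApos : 0 < A := lt_of_lt_of_le hdx (le_max_right _ _)
  have hA'pos : 0 < A' := lt_of_lt_of_le hdx (le_max_right _ _)
  have hBpos : 0 < B := lt_of_lt_of_le (hdx.trans_le hdS) (le_max_right _ _)
  have hB'pos : 0 < B' := lt_of_lt_of_le (hdx.trans_le hdS) (le_max_right _ _)
  have hAA' : A ≤ A' := max_le_max hls le_rfl
  have hBB' : B ≤ B' := max_le_max hls le_rfl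
  have hanti : B' * A ≤ A' * B := max_ratio_anti hs.le hls hdS
  set μ := A' / A with hμ
  set ν := B' / B with hν
  have hν1 : 1 ≤ ν := (one_le_div hBpos).2 hBB'
  have hνμ : ν ≤ μ := (div_le_div_iff₀ hBpos hApos).2 hanti
  have hB'lam : B' ≤ lam * B := by
    apply max_le
    · exact mul_le_mul_of_nonneg_left (le_max_left _ _) hl0.le
    · exact le_trans (le_max_right s dS) (le_mul_of_one_le_left hBpos.le hl)
  have hνlam : ν ≤ lam := (div_le_iff₀ hBpos).2 hB'lam
  have hcore : ν ^ α ≤ μ ^ σ * lam ^ (max σ α - σ) :=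
    core_rpow hν1 hνμ hνlam (by simp [le_max_right]) hσ0.le (by simp [le_max_left])
  have key : lam ^ (Nr - max σ α) * ν ^ α ≤ lam ^ (Nr - σ) * μ ^ σ := by
    have := mul_le_mul_of_nonneg_left hcore (le_of_lt (Real.rpow_pos_of_pos hl0 (Nr - max σ α)))
    calc lam ^ (Nr - max σ α) * ν ^ α ≤ lam ^ (Nr - max σ α) * (μ ^ σ * lam ^ (max σ α - σ)) := this
      _ = (lam ^ (Nr - max σ α) * lam ^ (max σ α - σ)) * μ ^ σ := by ring
      _ = lam ^ (Nr - σ) * μ ^ σ := by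
          rw [← Real.rpow_add hl0]; ring_nf
  have hA'eq : A' ^ σ = μ ^ σ * A ^ σ := by
    rw [hμ, ← Real.mul_rpow (by positivity) hApos.le, div_mul_cancel₀ _ hApos.ne']
  have hB'eq : B' ^ α = ν ^ α * B ^ α := by
    rw [hν, ← Real.mul_rpow (by positivity) hBpos.le, div_mul_cancel₀ _ hBpos.ne']
  rw [← mul_div_assoc, div_le_div_iff₀ (Real.rpow_pos_of_pos hBpos α) (Real.rpow_pos_of_pos hB'pos α)]
  calc lam ^ (Nr - max σ α) * (s ^ (Nr - σ) * A ^ σ) * B' ^ α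
      = (lam ^ (Nr - max σ α) * ν ^ α) * (s ^ (Nr - σ) * A ^ σ * B ^ α) := by
        rw [hB'eq]; ring
    _ ≤ (lam ^ (Nr - σ) * μ ^ σ) * (s ^ (Nr - σ) * A ^ σ * B ^ α) := by
        apply mul_le_mul_of_nonneg_right key; positivity
    _ = (lam * s) ^ (Nr - σ) * A' ^ σ * B ^ α := by
        rw [hA'eq, Real.mul_rpow hl0.le hs.le]; ring

private lemma g_mono {Nr σ α dx dS s s' : ℝ} (hσ0 : 0 < σ) (hσN : σ < Nr) (hα : α < Nr)
    (hdx : 0 < dx) (hdS : dx ≤ dS) (hs : 0 < s) (hss' : s ≤ s') :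
    s ^ (Nr - σ) * (max s dx) ^ σ / (max s dS) ^ α
      ≤ s' ^ (Nr - σ) * (max s' dx) ^ σ / (max s' dS) ^ α := by
  have hl : 1 ≤ s' / s := (one_le_div hs).2 hss'
  have h := g_scale hσ0 hσN hα hdx hdS hs hl
  rw [div_mul_cancel₀ _ hs.ne'] at h
  refine le_trans ?_ h
  have h1 : 1 ≤ (s'/s) ^ (Nr - max σ α) :=
    Real.one_le_rpow hl (by have := max_lt hσN hα; linarith)
  have hpos : 0 ≤ s ^ (Nr - σ) * (max s dx) ^ σ / (max s dS) ^ α := by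
    have hBpos : 0 < max s dS := lt_of_lt_of_le (hdx.trans_le hdS) (le_max_right _ _)
    positivity
  nlinarith

private lemma abs_bound {B a α : ℝ} (hB : 0 < B) (hBa : B ≤ a) (ha2 : a ≤ 2 * B) :
    B ^ α ≤ 2 ^ |α| * a ^ α := by
  have ha : 0 < a := hB.trans_le hBa
  rcases le_or_gt 0 α with h | h
  · have h1 : B ^ α ≤ a ^ α := Real.rpow_le_rpow hB.le hBa h
    have h2 : (1:ℝ) ≤ 2 ^ |α| := Real.one_le_rpow one_le_two (abs_nonneg _)
    nlinarith [Real.rpow_pos_of_pos ha α]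
  · have h1 : (2 * B) ^ α ≤ a ^ α := Real.rpow_le_rpow_of_nonpos ha ha2 h.le
    rw [Real.mul_rpow (by norm_num) hB.le] at h1
    have h2 : 2 ^ |α| * (2 ^ α * B ^ α) = B ^ α := by
      rw [← mul_assoc, ← Real.rpow_add two_pos, abs_of_neg h, neg_add_cancel, Real.rpow_zero,
        one_mul]
    nlinarith [Real.rpow_pos_of_pos (two_pos (α := ℝ)) |α|]

private lemma abs_bound' {B a α : ℝ} (hB : 0 < B) (hBa : B ≤ a) (ha2 : a ≤ 2 * B) :
    a ^ α ≤ 2 ^ |α| * B ^ α := by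
  have ha : 0 < a := hB.trans_le hBa
  rcases le_or_gt 0 α with h | h
  · rw [abs_of_nonneg h]
    calc a ^ α ≤ (2 * B) ^ α := Real.rpow_le_rpow ha.le ha2 h
      _ = 2 ^ α * B ^ α := Real.mul_rpow (by norm_num) hB.le
  · have h1 : a ^ α ≤ B ^ α := Real.rpow_le_rpow_of_nonpos hB hBa h.le
    have h2 : (1:ℝ) ≤ 2 ^ |α| := Real.one_le_rpow one_le_two (abs_nonneg _)
    nlinarith [Real.rpow_pos_of_pos hB α]

private lemma ker_bounds {Nr σ α ρ dx dy dSx dSy : ℝ} (hσ0 : 0 < σ)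
    (hρ : 0 < ρ) (hdx : 0 < dx) (hdxS : dx ≤ dSx) (hdy : dy ≤ dx + ρ) (hdSy : dSy ≤ dSx + ρ) :
    ρ ^ (Nr - σ) * (max ρ (max dy dx)) ^ σ / (max ρ (max dSy dSx)) ^ α
      ≤ 2 ^ (σ + |α|) * (ρ ^ (Nr - σ) * (max ρ dx) ^ σ / (max ρ dSx) ^ α) ∧
    ρ ^ (Nr - σ) * (max ρ dx) ^ σ / (max ρ dSx) ^ α
      ≤ 2 ^ (σ + |α|) * (ρ ^ (Nr - σ) * (max ρ (max dy dx)) ^ σ / (max ρ (max dSy dSx)) ^ α) := by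
  set A := max ρ dx with hA
  set B := max ρ dSx with hB
  set e := max ρ (max dy dx) with he
  set a := max ρ (max dSy dSx) with ha
  have hApos : 0 < A := lt_of_lt_of_le hρ (le_max_left _ _)
  have hBpos : 0 < B := lt_of_lt_of_le hρ (le_max_left _ _)
  have hAe : A ≤ e := max_le_max le_rfl (le_max_right _ _)
  have hBa : B ≤ a := max_le_max le_rfl (le_max_right _ _)
  have hepos : 0 < e := hApos.trans_le hAe
  have hapos : 0 < a := hBpos.trans_le hBa
  have he2 : e ≤ 2 * A := by
    apply max_le
    · nlinarith [le_max_left ρ dx]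
    · apply max_le
      · nlinarith [le_max_left ρ dx, le_max_right ρ dx]
      · nlinarith [le_max_right ρ dx]
  have ha2 : a ≤ 2 * B := by
    apply max_le
    · nlinarith [le_max_left ρ dSx]
    · apply max_le
      · nlinarith [le_max_left ρ dSx, le_max_right ρ dSx]
      · nlinarith [le_max_right ρ dSx]
  have heσ : e ^ σ ≤ 2 ^ σ * A ^ σ := by
    have := Real.rpow_le_rpow hepos.le he2 hσ0.le
    rwa [Real.mul_rpow (by norm_num) hApos.le] at this
  have hAσ : A ^ σ ≤ e ^ σ := Real.rpow_le_rpow hApos.le hAe hσ0.le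
  have hBα : B ^ α ≤ 2 ^ |α| * a ^ α := abs_bound hBpos hBa ha2
  have haα : a ^ α ≤ 2 ^ |α| * B ^ α := abs_bound' hBpos hBa ha2
  have hρσ : (0:ℝ) < ρ ^ (Nr - σ) := Real.rpow_pos_of_pos hρ _
  have h2σ1 : (1:ℝ) ≤ 2 ^ σ := Real.one_le_rpow one_le_two hσ0.le
  have hBαpos : (0:ℝ) < B ^ α := Real.rpow_pos_of_pos hBpos α
  have haαpos : (0:ℝ) < a ^ α := Real.rpow_pos_of_pos hapos α
  have hsum : (2:ℝ) ^ (σ + |α|) = 2 ^ σ * 2 ^ |α| := Real.rpow_add two_pos _ _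
  constructor
  · rw [← mul_div_assoc, div_le_div_iff₀ haαpos hBαpos]
    calc ρ ^ (Nr - σ) * e ^ σ * B ^ α = ρ ^ (Nr - σ) * (e ^ σ * B ^ α) := by ring
      _ ≤ ρ ^ (Nr - σ) * ((2 ^ σ * A ^ σ) * (2 ^ |α| * a ^ α)) := by
          have := mul_le_mul heσ hBα hBαpos.le (by positivity)
          exact mul_le_mul_of_nonneg_left this hρσ.le
      _ = 2 ^ (σ + |α|) * (ρ ^ (Nr - σ) * A ^ σ) * a ^ α := by rw [hsum]; ring
  · rw [← mul_div_assoc, div_le_div_iff₀ hBαpos haαpos]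
    calc ρ ^ (Nr - σ) * A ^ σ * a ^ α ≤ ρ ^ (Nr - σ) * (e ^ σ * (2 ^ |α| * B ^ α)) := by
          have := mul_le_mul hAσ haα haαpos.le (Real.rpow_pos_of_pos hepos σ).le
          calc ρ ^ (Nr - σ) * A ^ σ * a ^ α = ρ ^ (Nr - σ) * (A ^ σ * a ^ α) := by ring
            _ ≤ ρ ^ (Nr - σ) * (e ^ σ * (2 ^ |α| * B ^ α)) :=
                mul_le_mul_of_nonneg_left this hρσ.le
      _ ≤ 2 ^ σ * (ρ ^ (Nr - σ) * (e ^ σ * (2 ^ |α| * B ^ α))) := by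
          nlinarith [Real.rpow_pos_of_pos hepos σ, mul_pos hρσ (mul_pos (Real.rpow_pos_of_pos hepos σ) (mul_pos (Real.rpow_pos_of_pos (two_pos (α := ℝ)) |α|) hBαpos))]
      _ = 2 ^ (σ + |α|) * (ρ ^ (Nr - σ) * e ^ σ) * B ^ α := by rw [hsum]; ring

private lemma max_ratio_anti' {s s' c c' : ℝ} (hs : 0 ≤ s) (hss' : s ≤ s') (hcc' : c ≤ c') :
    max s' c' * max s c ≤ max s' c * max s c' := by
  have hs' : 0 ≤ s' := hs.trans hss'
  rcases le_or_gt c' s' with h | h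
  · rw [max_eq_left h, max_eq_left (hcc'.trans h)]
    exact mul_le_mul_of_nonneg_left (max_le_max le_rfl hcc') hs'
  · rw [max_eq_right h.le, max_eq_right ((hss'.trans h.le))]
    have h1 : max s c ≤ max s' c := max_le_max hss' le_rfl
    nlinarith [le_max_left s c, (hs'.trans h.le)]

private lemma core_rpow' {ν μ lam e e₁ e₂ : ℝ} (hν : 1 ≤ ν) (hνμ : ν ≤ μ) (hνl : ν ≤ lam)
    (he : e ≤ e₁ + e₂) (h1 : 0 ≤ e₁) (h2 : 0 ≤ e₂) : ν ^ e ≤ μ ^ e₁ * lam ^ e₂ := by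
  have hν0 : (0:ℝ) < ν := lt_of_lt_of_le one_pos hν
  calc ν ^ e ≤ ν ^ (e₁ + e₂) := Real.rpow_le_rpow_of_exponent_le hν he
    _ = ν ^ e₁ * ν ^ e₂ := Real.rpow_add hν0 _ _
    _ ≤ μ ^ e₁ * lam ^ e₂ :=
        mul_le_mul (Real.rpow_le_rpow hν0.le hνμ h1) (Real.rpow_le_rpow hν0.le hνl h2)
          (Real.rpow_nonneg hν0.le _) (Real.rpow_nonneg (by linarith) _)

private lemma h_mono {Nr b θ dx dS s s' : ℝ} (hb : 0 < b) (hsum : 0 < b + θ + Nr)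
    (hN0 : 0 ≤ Nr) (hdx : 0 < dx) (hdS : dx ≤ dS) (hs : 0 < s) (hss' : s ≤ s') :
    (max dx s) ^ b * (max dS s) ^ θ * s ^ Nr ≤ (max dx s') ^ b * (max dS s') ^ θ * s' ^ Nr := by
  have hs' : 0 < s' := hs.trans_le hss'
  set A := max dx s with hA
  set A' := max dx s' with hA'
  set B := max dS s with hB
  set B' := max dS s' with hB'
  have hApos : 0 < A := lt_of_lt_of_le hdx (le_max_left _ _)
  have hA'pos : 0 < A' := lt_of_lt_of_le hdx (le_max_left _ _)
  have hBpos : 0 < B := lt_of_lt_of_le (hdx.trans_le hdS) (le_max_left _ _)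
  have hB'pos : 0 < B' := lt_of_lt_of_le (hdx.trans_le hdS) (le_max_left _ _)
  set μ := A' / A with hμ
  set ν := B' / B with hν
  set lam := s' / s with hlam
  have hν1 : 1 ≤ ν := (one_le_div hBpos).2 (max_le_max le_rfl hss')
  have hanti : B' * A ≤ A' * B := by
    have := max_ratio_anti' hs.le hss' hdS
    rw [max_comm s' dx, max_comm s dx, max_comm s' dS, max_comm s dS] at *
    linarith [this]
  have hνμ : ν ≤ μ := (div_le_div_iff₀ hBpos hApos).2 hanti
  have hνlam : ν ≤ lam := by
    rw [hν, hlam, div_le_div_iff₀ hBpos hs, hB', hB]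
    rcases le_or_gt dS s' with h | h
    · rw [max_eq_right h]
      nlinarith [le_max_right dS s, le_max_left dS s, hdx.trans_le hdS]
    · rw [max_eq_left h.le, max_eq_left (by linarith : dS ≥ s)]
      nlinarith
  have hcore : ν ^ (-θ) ≤ μ ^ b * lam ^ Nr :=
    core_rpow' hν1 hνμ hνlam (by linarith) hb.le hN0
  have hνpos : (0:ℝ) < ν := lt_of_lt_of_le one_pos hν1
  have hone : 1 ≤ μ ^ b * lam ^ Nr * ν ^ θ := by
    have h3 : ν ^ (-θ) * ν ^ θ = 1 := by
      rw [← Real.rpow_add hνpos]; simp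
    have h4 : (0:ℝ) < ν ^ θ := Real.rpow_pos_of_pos hνpos θ
    nlinarith
  have hA'eq : A' ^ b = μ ^ b * A ^ b := by
    rw [hμ, ← Real.mul_rpow (by positivity) hApos.le, div_mul_cancel₀ _ hApos.ne']
  have hB'eq : B' ^ θ = ν ^ θ * B ^ θ := by
    rw [hν, ← Real.mul_rpow (by positivity) hBpos.le, div_mul_cancel₀ _ hBpos.ne']
  have hs'eq : s' ^ Nr = lam ^ Nr * s ^ Nr := by
    rw [hlam, ← Real.mul_rpow (by positivity) hs.le, div_mul_cancel₀ _ hs.ne']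
  calc A ^ b * B ^ θ * s ^ Nr = 1 * (A ^ b * B ^ θ * s ^ Nr) := (one_mul _).symm
    _ ≤ (μ ^ b * lam ^ Nr * ν ^ θ) * (A ^ b * B ^ θ * s ^ Nr) := by
        apply mul_le_mul_of_nonneg_right hone
        have h5 : (0:ℝ) < B ^ θ := Real.rpow_pos_of_pos hBpos θ
        positivity
    _ = A' ^ b * B' ^ θ * s' ^ Nr := by rw [hA'eq, hB'eq, hs'eq]; ring

private lemma h_scale {Nr b θ dx dS s lam : ℝ} (hb : 0 ≤ b) (hN0 : 0 ≤ Nr)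
    (hdx : 0 < dx) (hdS : 0 < dS) (hs : 0 < s) (hl : 1 ≤ lam) :
    (max dx (lam * s)) ^ b * (max dS (lam * s)) ^ θ * (lam * s) ^ Nr
      ≤ lam ^ (b + max θ 0 + Nr) * ((max dx s) ^ b * (max dS s) ^ θ * s ^ Nr) := by
  have hl0 : (0:ℝ) < lam := lt_of_lt_of_le one_pos hl
  have hApos : 0 < max dx s := lt_of_lt_of_le hdx (le_max_left _ _)
  have hBpos : 0 < max dS s := lt_of_lt_of_le hdS (le_max_left _ _)
  have h1 : max dx (lam * s) ≤ lam * max dx s := by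
    apply max_le
    · exact le_trans (le_mul_of_one_le_left hdx.le hl)
        (mul_le_mul_of_nonneg_left (le_max_left _ _) hl0.le)
    · exact mul_le_mul_of_nonneg_left (le_max_right _ _) hl0.le
  have h2 : max dS (lam * s) ≤ lam * max dS s := by
    apply max_le
    · exact le_trans (le_mul_of_one_le_left hdS.le hl)
        (mul_le_mul_of_nonneg_left (le_max_left _ _) hl0.le)
    · exact mul_le_mul_of_nonneg_left (le_max_right _ _) hl0.le
  have hb1 : (max dx (lam * s)) ^ b ≤ lam ^ b * (max dx s) ^ b := by
    have := Real.rpow_le_rpow (by positivity) h1 hb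
    rwa [Real.mul_rpow hl0.le hApos.le] at this
  have hθ1 : (max dS (lam * s)) ^ θ ≤ lam ^ (max θ 0) * (max dS s) ^ θ := by
    rcases le_or_gt 0 θ with h | h
    · rw [max_eq_left h]
      have := Real.rpow_le_rpow (by positivity) h2 h
      rwa [Real.mul_rpow hl0.le hBpos.le] at this
    · rw [max_eq_right h.le, Real.rpow_zero, one_mul]
      exact Real.rpow_le_rpow_of_nonpos hBpos (max_le_max le_rfl (le_mul_of_one_le_left hs.le hl)) h.le
  have hN1 : (lam * s) ^ Nr = lam ^ Nr * s ^ Nr := Real.mul_rpow hl0.le hs.le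
  have hexp : lam ^ (b + max θ 0 + Nr) = lam ^ b * lam ^ (max θ 0) * lam ^ Nr := by
    rw [← Real.rpow_add hl0, ← Real.rpow_add hl0]
  calc (max dx (lam * s)) ^ b * (max dS (lam * s)) ^ θ * (lam * s) ^ Nr
      ≤ (lam ^ b * (max dx s) ^ b) * (lam ^ (max θ 0) * (max dS s) ^ θ) * (lam ^ Nr * s ^ Nr) := by
        rw [hN1]
        apply mul_le_mul_of_nonneg_right _ (by positivity)
        apply mul_le_mul hb1 hθ1 (Real.rpow_pos_of_pos (lt_of_lt_of_le hdS (le_max_left _ _)) θ).le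
        positivity
    _ = lam ^ (b + max θ 0 + Nr) * ((max dx s) ^ b * (max dS s) ^ θ * s ^ Nr) := by
        rw [hexp]; ring

end AuxLemmas

/-- Doubling property of `∫₀^r ω(𝔅(x,t)) t^{−2} dt`. -/
theorem stmt_9 {N : ℕ} (hN : 3 ≤ N) (Ω S : Set (EuclideanSpace ℝ (Fin N)))
    (hΩo : IsOpen Ω) (hΩb : Bornology.IsBounded Ω)
    (hS : S ⊆ frontier Ω) (hSne : S.Nonempty) (hSc : IsCompact S)
    (α σ b θ : ℝ) (hα : α < N) (hσ0 : 0 < σ) (hσN : σ < N) (hb : 0 < b)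
    (hbθα : 0 < b + θ + α)
    (ω : Measure (EuclideanSpace ℝ (Fin N)))
    (c₁ c₂ : ℝ) (hc₁ : 0 < c₁) (hc₂ : 0 < c₂)
    (hω : ∀ x ∈ Ω, ∀ s : ℝ, 0 < s → s ≤ 4 * diam Ω →
      ENNReal.ofReal (c₁ * ((max (infDist x (frontier Ω)) s) ^ b *
          (max (infDist x S) s) ^ θ * s ^ (N : ℝ))) ≤ ω (ball x s ∩ Ω) ∧
      ω (ball x s ∩ Ω) ≤ ENNReal.ofReal (c₂ * ((max (infDist x (frontier Ω)) s) ^ b *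
          (max (infDist x S) s) ^ θ * s ^ (N : ℝ)))) :
    ∃ C > 0, ∀ x ∈ Ω, ∀ r : ℝ, 0 < r →
      ∫⁻ t in Set.Ioc (0 : ℝ) (2 * r),
          ω (quasiBall N α σ Ω S x t) * ENNReal.ofReal (t ^ (-2 : ℝ)) ≤
      ENNReal.ofReal C * ∫⁻ t in Set.Ioc (0 : ℝ) r,
          ω (quasiBall N α σ Ω S x t) * ENNReal.ofReal (t ^ (-2 : ℝ)) := by
  -- global constants
  set Nr := (N:ℝ) with hNrdef
  have hσNr : σ < Nr := hσN
  have hαNr : α < Nr := hα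
  have hNr0 : (0:ℝ) ≤ Nr := by rw [hNrdef]; positivity
  have hbθNr : 0 < b + θ + Nr := by linarith
  set K : ℝ := 2 ^ (σ + |α|) with hKdef
  have hK0 : (0:ℝ) < K := Real.rpow_pos_of_pos two_pos _
  have hK1 : (1:ℝ) ≤ K := Real.one_le_rpow one_le_two (by positivity)
  set q : ℝ := Nr - max σ α with hqdef
  have hq : 0 < q := by
    have := max_lt hσNr hαNr; rw [hqdef]; linarith
  set lam2 : ℝ := (2*K^2) ^ q⁻¹ with hlam2def
  have hlam2 : 1 ≤ lam2 := Real.one_le_rpow (by nlinarith) (by positivity)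
  have hlam20 : 0 < lam2 := by linarith
  set Λ : ℝ := 2 * lam2 with hΛdef
  have hΛ1 : 1 ≤ Λ := by linarith
  have hΛ0 : 0 < Λ := by linarith
  set p : ℝ := b + max θ 0 + Nr with hpdef
  set Cd : ℝ := max 1 (c₂ * Λ ^ p / c₁) with hCddef
  have hCd1 : (1:ℝ) ≤ Cd := le_max_left _ _
  have hCd0 : (0:ℝ) < Cd := lt_of_lt_of_le one_pos hCd1
  -- the key doubling estimate for quasi-balls
  have key : ∀ x ∈ Ω, ∀ t : ℝ, 0 < t →
      ω (quasiBall N α σ Ω S x (2*t)) ≤ ENNReal.ofReal Cd * ω (quasiBall N α σ Ω S x t) := by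
    intro x hx t ht
    have hFne : (frontier Ω).Nonempty := hSne.mono hS
    set dx := infDist x (frontier Ω) with hdxdef
    set dS := infDist x S with hdSdef
    have hdx : 0 < dx := by
      rw [hdxdef, ← isClosed_frontier.notMem_iff_infDist_pos hFne]
      intro hmem
      rw [hΩo.frontier_eq] at hmem; exact hmem.2 hx
    have hdxS : dx ≤ dS := infDist_le_infDist_of_subset hS hSne
    have hdSpos : 0 < dS := hdx.trans_le hdxS
    have hD : 0 < diam Ω := by
      obtain ⟨ε, hε, hball⟩ := Metric.isOpen_iff.1 hΩo x hx
      have hN0 : 0 < N := by omega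
      set v : EuclideanSpace ℝ (Fin N) := EuclideanSpace.single ⟨0, hN0⟩ (ε/2) with hvdef
      have hv : ‖v‖ = ε/2 := by
        rw [hvdef, EuclideanSpace.norm_single, Real.norm_eq_abs, abs_of_pos (by linarith)]
      have hyΩ : x + v ∈ Ω := hball (by
        rw [mem_ball, dist_eq_norm, add_sub_cancel_left, hv]; linarith)
      have hd := dist_le_diam_of_mem hΩb hyΩ hx
      rw [dist_eq_norm, add_sub_cancel_left, hv] at hd; linarith
    set D := diam Ω with hDdef
    set G : ℝ → ℝ := fun s => s ^ (Nr - σ) * (max s dx) ^ σ / (max s dS) ^ α with hGdef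
    have hGmono : ∀ s s' : ℝ, 0 < s → s ≤ s' → G s ≤ G s' := by
      intro s s' hs hss'
      rw [hGdef]
      exact g_mono hσ0 hσNr hαNr hdx hdxS hs hss'
    have hGscale : ∀ s : ℝ, 0 < s → lam2 ^ q * G s ≤ G (lam2 * s) := by
      intro s hs
      rw [hGdef, hqdef]
      exact g_scale hσ0 hσNr hαNr hdx hdxS hs hlam2
    set E := {s : ℝ | 0 < s ∧ K * G s ≤ t} with hEdef
    set β := (t / (K * (dx ^ σ / dS ^ α))) ^ (Nr - σ)⁻¹ with hβdef
    have hβ0 : 0 < β := by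
      rw [hβdef]
      exact Real.rpow_pos_of_pos (by positivity) _
    have hmin0 : 0 < min dx β := lt_min hdx hβ0
    have hs₁ : min dx β ∈ E := by
      refine ⟨hmin0, ?_⟩
      have hmin : min dx β ≤ dx := min_le_left _ _
      have h1 : max (min dx β) dx = dx := max_eq_right hmin
      have h2 : max (min dx β) dS = dS := max_eq_right (hmin.trans hdxS)
      have hmb : (min dx β) ^ (Nr - σ) ≤ β ^ (Nr - σ) :=
        Real.rpow_le_rpow hmin0.le (min_le_right _ _) (by linarith)
      have hβval : β ^ (Nr - σ) = t / (K * (dx ^ σ / dS ^ α)) := by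
        rw [hβdef]
        exact Real.rpow_inv_rpow (by positivity) (by linarith)
      have hG1 : G (min dx β) = (min dx β) ^ (Nr - σ) * dx ^ σ / dS ^ α := by
        rw [hGdef]; simp only [h1, h2]
      rw [hG1]
      calc K * ((min dx β) ^ (Nr - σ) * dx ^ σ / dS ^ α)
          ≤ K * (β ^ (Nr - σ) * dx ^ σ / dS ^ α) := by
            apply mul_le_mul_of_nonneg_left _ hK0.le
            apply div_le_div_of_nonneg_right _ (by positivity)
            exact mul_le_mul_of_nonneg_right hmb (by positivity)
        _ = t := by
            rw [hβval]; field_simp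
    have hbdd : BddAbove E := by
      refine ⟨max dS ((t/K) ^ (Nr - α)⁻¹), fun s hs => ?_⟩
      rcases le_or_gt s dS with h | h
      · exact h.trans (le_max_left _ _)
      · have hspos : 0 < s := hs.1
        have h1 : max s dx = s := max_eq_left (hdxS.trans h.le)
        have h2 : max s dS = s := max_eq_left h.le
        have hGs : G s = s ^ (Nr - α) := by
          rw [hGdef]; simp only [h1, h2]
          rw [← Real.rpow_add hspos, ← Real.rpow_sub hspos]
          norm_num
        have hle : s ^ (Nr - α) ≤ t / K := by
          rw [le_div_iff₀ hK0]
          have := hs.2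
          rw [hGs] at this; linarith
        calc s = (s ^ (Nr - α)) ^ (Nr - α)⁻¹ := (Real.rpow_rpow_inv hspos.le (by linarith)).symm
          _ ≤ (t/K) ^ (Nr - α)⁻¹ :=
              Real.rpow_le_rpow (Real.rpow_pos_of_pos hspos _).le hle (inv_nonneg.2 (by linarith))
          _ ≤ _ := le_max_right _ _
    set r₀ := sSup E with hr₀def
    have hr₀ : 0 < r₀ := lt_of_lt_of_le hmin0 (le_csSup hbdd hs₁)
    have hΛr₀pos : 0 < Λ * r₀ := mul_pos hΛ0 hr₀
    have hdc : ∀ s : ℝ, 0 < s → s < r₀ → K * G s ≤ t := by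
      intro s hspos hsr
      obtain ⟨s', hs'E, hss'⟩ := exists_lt_of_lt_csSup ⟨_, hs₁⟩ hsr
      exact le_trans (mul_le_mul_of_nonneg_left (hGmono s s' hspos hss'.le) hK0.le) hs'E.2
    have h2r : t < K * G (2*r₀) := by
      by_contra hcon
      push_neg at hcon
      have hmem : 2*r₀ ∈ E := ⟨by linarith, hcon⟩
      have := le_csSup hbdd hmem
      linarith
    have hbig : 2*K*t < G (Λ * r₀) := by
      have hg2 : t/K < G (2*r₀) := (div_lt_iff₀ hK0).2 (by linarith [h2r])
      have hsc := hGscale (2*r₀) (by linarith)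
      have hlq : lam2 ^ q = 2*K^2 := by
        rw [hlam2def]
        exact Real.rpow_inv_rpow (by positivity) hq.ne'
      have hΛr : Λ * r₀ = lam2 * (2*r₀) := by rw [hΛdef]; ring
      rw [hΛr]
      calc 2*K*t = (2*K^2) * (t/K) := by field_simp
        _ < (2*K^2) * G (2*r₀) := by
            apply mul_lt_mul_of_pos_left hg2 (by positivity)
        _ = lam2 ^ q * G (2*r₀) := by rw [hlq]
        _ ≤ G (lam2 * (2*r₀)) := hsc
    -- kernel inverse formula
    have hkerinv : ∀ y : EuclideanSpace ℝ (Fin N), (NKernel N α σ Ω S y x)⁻¹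
        = dist y x ^ (Nr - σ) * (max (dist y x) (max (infDist y (frontier Ω)) dx)) ^ σ
          / (max (dist y x) (max (infDist y S) dS)) ^ α := by
      intro y
      simp only [NKernel, inv_div, ← hdxdef, ← hdSdef, ← hNrdef]
    -- inclusions
    have hI1 : ∀ y, y ∈ ball x r₀ ∩ Ω → y ≠ x → y ∈ quasiBall N α σ Ω S x t := by
      intro y hy hne
      refine ⟨hy.2, hne, ?_⟩
      have hρ : 0 < dist y x := dist_pos.2 hne
      have hρr : dist y x < r₀ := mem_ball.1 hy.1
      have hdy1 : infDist y (frontier Ω) ≤ dx + dist y x := by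
        rw [hdxdef]; exact infDist_le_infDist_add_dist
      have hdy2 : infDist y S ≤ dS + dist y x := by
        rw [hdSdef]; exact infDist_le_infDist_add_dist
      have hky := (ker_bounds (Nr := Nr) (α := α) hσ0 hρ hdx hdxS hdy1 hdy2).1
      rw [hkerinv y]
      refine le_trans ?_ (hdc _ hρ hρr)
      have hGeq : G (dist y x)
          = dist y x ^ (Nr - σ) * (max (dist y x) dx) ^ σ / (max (dist y x) dS) ^ α := by
        rw [hGdef]
      rw [hGeq, hKdef]
      exact hky
    have hI2 : quasiBall N α σ Ω S x (2*t) ⊆ ball x (Λ*r₀) ∩ Ω := by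
      intro y hy
      obtain ⟨hyΩ, hne, hkle⟩ := hy
      refine ⟨?_, hyΩ⟩
      rw [mem_ball]
      by_contra hcon
      push_neg at hcon
      have hρ : 0 < dist y x := dist_pos.2 hne
      have hdy1 : infDist y (frontier Ω) ≤ dx + dist y x := by
        rw [hdxdef]; exact infDist_le_infDist_add_dist
      have hdy2 : infDist y S ≤ dS + dist y x := by
        rw [hdSdef]; exact infDist_le_infDist_add_dist
      have hk2 := (ker_bounds (Nr := Nr) (α := α) hσ0 hρ hdx hdxS hdy1 hdy2).2
      have hGle : G (dist y x) ≤ 2*K*t := by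
        rw [hkerinv y] at hkle
        have hGeq : G (dist y x)
            = dist y x ^ (Nr - σ) * (max (dist y x) dx) ^ σ / (max (dist y x) dS) ^ α := by
          rw [hGdef]
        rw [hGeq]
        rw [← hKdef] at hk2
        calc dist y x ^ (Nr - σ) * (max (dist y x) dx) ^ σ / (max (dist y x) dS) ^ α
            ≤ K * (dist y x ^ (Nr - σ)
                * (max (dist y x) (max (infDist y (frontier Ω)) dx)) ^ σ
                / (max (dist y x) (max (infDist y S) dS)) ^ α) := hk2
          _ ≤ K * (2*t) := mul_le_mul_of_nonneg_left hkle hK0.le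
          _ = 2*K*t := by ring
      have hmono2 := hGmono (Λ*r₀) (dist y x) hΛr₀pos hcon
      linarith
    -- the atom at x has measure zero
    have hatom : ω {x} = 0 := by
      have hbound : ∀ n : ℕ, ω {x}
          ≤ ENNReal.ofReal (c₂ * (dx^b * dS^θ * (min dx (2*D) / ((n:ℝ)+1))^Nr)) := by
        intro n
        have hn1 : (0:ℝ) < (n:ℝ)+1 := by positivity
        have hmindD : 0 < min dx (2*D) := lt_min hdx (by linarith)
        set s := min dx (2*D) / ((n:ℝ)+1) with hsdef
        have hspos : 0 < s := div_pos hmindD hn1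
        have hsle : s ≤ min dx (2*D) := by
          rw [hsdef]; exact div_le_self hmindD.le (by linarith)
        have hs4D : s ≤ 4*D := le_trans (hsle.trans (min_le_right _ _)) (by linarith)
        have h := (hω x hx s hspos hs4D).2
        rw [← hdxdef, ← hdSdef] at h
        have h1 : max dx s = dx := max_eq_left (hsle.trans (min_le_left _ _))
        have h2 : max dS s = dS := max_eq_left ((hsle.trans (min_le_left _ _)).trans hdxS)
        rw [h1, h2] at h
        refine le_trans (le_trans (measure_mono ?_) h) (le_of_eq ?_)
        · intro z hz; rw [mem_singleton_iff] at hz; subst hz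
          exact ⟨mem_ball_self hspos, hx⟩
        · rfl
      have htend : Filter.Tendsto
          (fun n : ℕ => ENNReal.ofReal (c₂ * (dx^b * dS^θ * (min dx (2*D) / ((n:ℝ)+1))^Nr)))
          Filter.atTop (nhds 0) := by
        have h0 : Filter.Tendsto (fun n : ℕ => min dx (2*D) / ((n:ℝ)+1))
            Filter.atTop (nhds 0) := by
          have h00 := tendsto_one_div_add_atTop_nhds_zero_nat.const_mul (min dx (2*D))
          simp only [mul_zero] at h00
          convert h00 using 2 with n
          ring
        have h1 : Filter.Tendsto (fun n : ℕ => (min dx (2*D) / ((n:ℝ)+1))^Nr)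
            Filter.atTop (nhds 0) := by
          have heq : ∀ n : ℕ, (min dx (2*D) / ((n:ℝ)+1))^Nr
              = (min dx (2*D) / ((n:ℝ)+1))^(N:ℕ) := fun n => by
            rw [hNrdef, Real.rpow_natCast]
          simp only [heq]
          have := h0.pow N
          simpa [zero_pow (by omega : N ≠ 0)] using this
        have h2 := (h1.const_mul (dx^b * dS^θ)).const_mul c₂
        simp only [mul_zero] at h2
        have h3 := ENNReal.tendsto_ofReal (f := Filter.atTop) h2
        simpa using h3
      exact le_antisymm (ge_of_tendsto' htend hbound) zero_le
    -- measure comparison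
    set u₁ := min (Λ*r₀) (2*D) with hu₁def
    set u₂ := min r₀ (2*D) with hu₂def
    have hu₁pos : 0 < u₁ := lt_min hΛr₀pos (by linarith)
    have hu₂pos : 0 < u₂ := lt_min hr₀ (by linarith)
    have hu₁4D : u₁ ≤ 4*D := le_trans (min_le_right _ _) (by linarith)
    have hu₂4D : u₂ ≤ 4*D := le_trans (min_le_right _ _) (by linarith)
    have hωu₁ := (hω x hx u₁ hu₁pos hu₁4D).2
    have hωu₂ := (hω x hx u₂ hu₂pos hu₂4D).1
    rw [← hdxdef, ← hdSdef] at hωu₁ hωu₂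
    have hsub1 : quasiBall N α σ Ω S x (2*t) ⊆ ball x u₁ ∩ Ω := by
      intro y hy
      have h := hI2 hy
      rcases le_or_gt (Λ*r₀) (2*D) with hc | hc
      · rwa [hu₁def, min_eq_left hc]
      · refine ⟨?_, h.2⟩
        rw [hu₁def, min_eq_right hc.le, mem_ball]
        have := dist_le_diam_of_mem hΩb h.2 hx
        rw [← hDdef] at this
        linarith
    have hsub2 : ball x u₂ ∩ Ω ⊆ quasiBall N α σ Ω S x t ∪ {x} := by
      intro y hy
      by_cases hne : y = x
      · right; exact hne
      · left
        refine hI1 y ⟨?_, hy.2⟩ hne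
        exact mem_ball.2 (lt_of_lt_of_le (mem_ball.1 hy.1) (min_le_left _ _))
    have hu₁u₂ : u₁ ≤ Λ * u₂ := by
      rcases le_total r₀ (2*D) with hc | hc
      · rw [hu₂def, min_eq_left hc]
        exact min_le_left _ _
      · rw [hu₂def, min_eq_right hc]
        calc u₁ ≤ 2*D := min_le_right _ _
          _ ≤ Λ * (2*D) := le_mul_of_one_le_left (by linarith) hΛ1
    have hH12 : (max dx u₁)^b * (max dS u₁)^θ * u₁^Nr
        ≤ Λ ^ p * ((max dx u₂)^b * (max dS u₂)^θ * u₂^Nr) := by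
      calc (max dx u₁)^b * (max dS u₁)^θ * u₁^Nr
          ≤ (max dx (Λ*u₂))^b * (max dS (Λ*u₂))^θ * (Λ*u₂)^Nr :=
            h_mono hb hbθNr hNr0 hdx hdxS hu₁pos hu₁u₂
        _ ≤ Λ ^ p * ((max dx u₂)^b * (max dS u₂)^θ * u₂^Nr) := by
            rw [hpdef]
            exact h_scale hb.le hNr0 hdx hdSpos hu₂pos hΛ1
    have hHu₂nn : 0 ≤ (max dx u₂)^b * (max dS u₂)^θ * u₂^Nr := by
      have hBp : 0 < max dS u₂ := lt_of_lt_of_le hdSpos (le_max_left _ _)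
      positivity
    calc ω (quasiBall N α σ Ω S x (2*t)) ≤ ω (ball x u₁ ∩ Ω) := measure_mono hsub1
      _ ≤ ENNReal.ofReal (c₂ * ((max dx u₁)^b * (max dS u₁)^θ * u₁^Nr)) := hωu₁
      _ ≤ ENNReal.ofReal (Cd * (c₁ * ((max dx u₂)^b * (max dS u₂)^θ * u₂^Nr))) := by
          apply ENNReal.ofReal_le_ofReal
          have hstep : c₂ * ((max dx u₁)^b * (max dS u₁)^θ * u₁^Nr)
              ≤ c₂ * (Λ ^ p * ((max dx u₂)^b * (max dS u₂)^θ * u₂^Nr)) :=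
            mul_le_mul_of_nonneg_left hH12 hc₂.le
          have hCdge : c₂ * Λ ^ p / c₁ ≤ Cd := le_max_right _ _
          have hΛp : (0:ℝ) < Λ ^ p := Real.rpow_pos_of_pos hΛ0 _
          calc c₂ * ((max dx u₁)^b * (max dS u₁)^θ * u₁^Nr)
              ≤ c₂ * Λ ^ p * ((max dx u₂)^b * (max dS u₂)^θ * u₂^Nr) := by
                linarith [hstep]
            _ = (c₂ * Λ ^ p / c₁) * (c₁ * ((max dx u₂)^b * (max dS u₂)^θ * u₂^Nr)) := by
                field_simp
            _ ≤ Cd * (c₁ * ((max dx u₂)^b * (max dS u₂)^θ * u₂^Nr)) := by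
                apply mul_le_mul_of_nonneg_right hCdge
                positivity
      _ = ENNReal.ofReal Cd * ENNReal.ofReal (c₁ * ((max dx u₂)^b * (max dS u₂)^θ * u₂^Nr)) :=
          ENNReal.ofReal_mul hCd0.le
      _ ≤ ENNReal.ofReal Cd * ω (ball x u₂ ∩ Ω) := mul_le_mul_right hωu₂ _
      _ ≤ ENNReal.ofReal Cd * ω (quasiBall N α σ Ω S x t) := by
          apply mul_le_mul_right
          calc ω (ball x u₂ ∩ Ω) ≤ ω (quasiBall N α σ Ω S x t ∪ {x}) := measure_mono hsub2
            _ ≤ ω (quasiBall N α σ Ω S x t) + ω {x} := measure_union_le _ _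
            _ = ω (quasiBall N α σ Ω S x t) := by rw [hatom, add_zero]
  -- final assembly
  refine ⟨1 + Cd^3, by positivity, ?_⟩
  intro x hx r hr
  have hmono : ∀ t t' : ℝ, t ≤ t' →
      ω (quasiBall N α σ Ω S x t) ≤ ω (quasiBall N α σ Ω S x t') := by
    intro t t' htt'
    exact measure_mono (fun y hy => ⟨hy.1, hy.2.1, hy.2.2.trans htt'⟩)
  have hsplit : (∫⁻ t in Set.Ioc (0:ℝ) (2*r),
        ω (quasiBall N α σ Ω S x t) * ENNReal.ofReal (t ^ (-2 : ℝ)))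
      = (∫⁻ t in Set.Ioc (0:ℝ) r,
        ω (quasiBall N α σ Ω S x t) * ENNReal.ofReal (t ^ (-2 : ℝ)))
      + ∫⁻ t in Set.Ioc r (2*r),
        ω (quasiBall N α σ Ω S x t) * ENNReal.ofReal (t ^ (-2 : ℝ)) := by
    rw [← lintegral_union measurableSet_Ioc (Set.Ioc_disjoint_Ioc_of_le le_rfl),
      Set.Ioc_union_Ioc_eq_Ioc hr.le (by linarith)]
  have hdoub3 : ω (quasiBall N α σ Ω S x (2*r))
      ≤ (ENNReal.ofReal Cd)^3 * ω (quasiBall N α σ Ω S x (r/4)) := by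
    have a1 := key x hx r hr
    have a2 := key x hx (r/2) (by linarith)
    have a3 := key x hx (r/4) (by linarith)
    rw [show 2*(r/2) = r by ring] at a2
    rw [show 2*(r/4) = r/2 by ring] at a3
    calc ω (quasiBall N α σ Ω S x (2*r))
        ≤ ENNReal.ofReal Cd * ω (quasiBall N α σ Ω S x r) := a1
      _ ≤ ENNReal.ofReal Cd * (ENNReal.ofReal Cd * ω (quasiBall N α σ Ω S x (r/2))) :=
          mul_le_mul_right a2 _
      _ ≤ ENNReal.ofReal Cd * (ENNReal.ofReal Cd
            * (ENNReal.ofReal Cd * ω (quasiBall N α σ Ω S x (r/4)))) := by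
          apply mul_le_mul_right; exact mul_le_mul_right a3 _
      _ = (ENNReal.ofReal Cd)^3 * ω (quasiBall N α σ Ω S x (r/4)) := by ring
  have hT2 : (∫⁻ t in Set.Ioc r (2*r),
        ω (quasiBall N α σ Ω S x t) * ENNReal.ofReal (t ^ (-2 : ℝ)))
      ≤ (ENNReal.ofReal Cd)^3 * ∫⁻ t in Set.Ioc (0:ℝ) r,
        ω (quasiBall N α σ Ω S x t) * ENNReal.ofReal (t ^ (-2 : ℝ)) := by
    have h1 : (∫⁻ t in Set.Ioc r (2*r),
          ω (quasiBall N α σ Ω S x t) * ENNReal.ofReal (t ^ (-2 : ℝ)))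
        ≤ ω (quasiBall N α σ Ω S x (2*r)) * ENNReal.ofReal (r ^ (-2:ℝ))
            * ENNReal.ofReal r := by
      calc (∫⁻ t in Set.Ioc r (2*r),
            ω (quasiBall N α σ Ω S x t) * ENNReal.ofReal (t ^ (-2 : ℝ)))
          ≤ ∫⁻ _t in Set.Ioc r (2*r),
            ω (quasiBall N α σ Ω S x (2*r)) * ENNReal.ofReal (r ^ (-2:ℝ)) := by
            apply setLIntegral_mono' measurableSet_Ioc
            intro τ hτ
            apply mul_le_mul' (hmono _ _ hτ.2)
            exact ENNReal.ofReal_le_ofReal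
              (Real.rpow_le_rpow_of_nonpos hr hτ.1.le (by norm_num))
        _ = ω (quasiBall N α σ Ω S x (2*r)) * ENNReal.ofReal (r ^ (-2:ℝ))
            * ENNReal.ofReal r := by
            rw [setLIntegral_const, Real.volume_Ioc]
            congr 1
            congr 1
            ring
    have h2 : ω (quasiBall N α σ Ω S x (r/4)) * ENNReal.ofReal ((r/2) ^ (-2:ℝ))
          * ENNReal.ofReal (r/4)
        ≤ ∫⁻ t in Set.Ioc (0:ℝ) r,
          ω (quasiBall N α σ Ω S x t) * ENNReal.ofReal (t ^ (-2 : ℝ)) := by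
      calc ω (quasiBall N α σ Ω S x (r/4)) * ENNReal.ofReal ((r/2) ^ (-2:ℝ))
            * ENNReal.ofReal (r/4)
          = ∫⁻ _t in Set.Ioc (r/4) (r/2),
            ω (quasiBall N α σ Ω S x (r/4)) * ENNReal.ofReal ((r/2) ^ (-2:ℝ)) := by
            rw [setLIntegral_const, Real.volume_Ioc]
            congr 1
            congr 1
            ring
        _ ≤ ∫⁻ t in Set.Ioc (r/4) (r/2),
            ω (quasiBall N α σ Ω S x t) * ENNReal.ofReal (t ^ (-2 : ℝ)) := by
            apply setLIntegral_mono' measurableSet_Ioc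
            intro τ hτ
            apply mul_le_mul' (hmono _ _ hτ.1.le)
            apply ENNReal.ofReal_le_ofReal
            apply Real.rpow_le_rpow_of_nonpos (by linarith [hτ.1]) hτ.2 (by norm_num)
        _ ≤ ∫⁻ t in Set.Ioc (0:ℝ) r,
            ω (quasiBall N α σ Ω S x t) * ENNReal.ofReal (t ^ (-2 : ℝ)) := by
            apply lintegral_mono_set
            apply Set.Ioc_subset_Ioc (by linarith) (by linarith)
    have hofr : ENNReal.ofReal (r ^ (-2:ℝ)) * ENNReal.ofReal r
        = ENNReal.ofReal ((r/2) ^ (-2:ℝ)) * ENNReal.ofReal (r/4) := by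
      rw [← ENNReal.ofReal_mul (by positivity), ← ENNReal.ofReal_mul (by positivity)]
      congr 1
      rw [Real.rpow_neg hr.le, Real.rpow_neg (by positivity),
        show ((2:ℝ)) = ((2:ℕ):ℝ) by norm_num, Real.rpow_natCast, Real.rpow_natCast]
      field_simp
      ring
    calc (∫⁻ t in Set.Ioc r (2*r),
          ω (quasiBall N α σ Ω S x t) * ENNReal.ofReal (t ^ (-2 : ℝ)))
        ≤ ω (quasiBall N α σ Ω S x (2*r)) * ENNReal.ofReal (r ^ (-2:ℝ))
            * ENNReal.ofReal r := h1
      _ = ω (quasiBall N α σ Ω S x (2*r))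
            * (ENNReal.ofReal ((r/2) ^ (-2:ℝ)) * ENNReal.ofReal (r/4)) := by
          rw [mul_assoc, hofr]
      _ ≤ ((ENNReal.ofReal Cd)^3 * ω (quasiBall N α σ Ω S x (r/4)))
            * (ENNReal.ofReal ((r/2) ^ (-2:ℝ)) * ENNReal.ofReal (r/4)) :=
          mul_le_mul_left hdoub3 _
      _ = (ENNReal.ofReal Cd)^3 * (ω (quasiBall N α σ Ω S x (r/4))
            * ENNReal.ofReal ((r/2) ^ (-2:ℝ)) * ENNReal.ofReal (r/4)) := by ring
      _ ≤ (ENNReal.ofReal Cd)^3 * ∫⁻ t in Set.Ioc (0:ℝ) r,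
            ω (quasiBall N α σ Ω S x t) * ENNReal.ofReal (t ^ (-2 : ℝ)) :=
          mul_le_mul_right h2 _
  rw [hsplit]
  have hCfin : ENNReal.ofReal (1 + Cd^3) = 1 + (ENNReal.ofReal Cd)^3 := by
    rw [ENNReal.ofReal_add (by norm_num) (by positivity), ENNReal.ofReal_one,
      ENNReal.ofReal_pow hCd0.le]
  rw [hCfin, add_mul, one_mul]
  exact add_le_add le_rfl hT2
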